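/- Let f be convex and L-smooth. If ⟨∇f(y), y - x⟩ - (f(y) - f(x)) = 0 for some points x, y, then ∇f(y) = ∇f(x). -/

import Mathlib

open Set

lemma hasDerivAt_comp_line {H : Type*} [NormedAddCommGroup H]
    [InnerProductSpace ℝ H] [CompleteSpace H]
    (f : H → ℝ) (f' : H → H) (hgrad : ∀ x, HasGradientAt f (f' x) x)
    (a v : H) (t : ℝ) :
    HasDerivAt (fun s : ℝ => f (a + s • v)) (inner ℝ (f' (a + t • v)) v : ℝ) t := by
  have hc : HasDerivAt (fun s : ℝ => a + s • v) v t := by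
    simpa using ((hasDerivAt_id t).smul_const v).const_add a
  have h := (hgrad (a + t • v)).hasFDerivAt.comp_hasDerivAt t hc
  simp [InnerProductSpace.toDual_apply_apply] at h
  exact h

lemma convex_grad_lower {H : Type*} [NormedAddCommGroup H]
    [InnerProductSpace ℝ H] [CompleteSpace H]
    (f : H → ℝ) (f' : H → H) (hconv : ConvexOn ℝ Set.univ f)
    (hgrad : ∀ x, HasGradientAt f (f' x) x) (a b : H) :
    f a + (inner ℝ (f' a) (b - a) : ℝ) ≤ f b := by
  set v := b - a with hv
  set g : ℝ → ℝ := fun s => f (a + s • v) with hg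
  have hd : HasDerivAt g (inner ℝ (f' a) v : ℝ) 0 := by
    have := hasDerivAt_comp_line f f' hgrad a v 0
    simpa using this
  have hslope : ∀ t ∈ Ioc (0:ℝ) 1, slope g 0 t ≤ f b - f a := by
    intro t ht
    have hcv := hconv.2 (mem_univ a) (mem_univ b) (by linarith [ht.2] : (0:ℝ) ≤ 1 - t)
      ht.1.le (by ring)
    have hpt : (1 - t) • a + t • b = a + t • v := by
      rw [hv]; module
    rw [hpt] at hcv
    have hgt : g t ≤ f a + t * (f b - f a) := by
      have : (1 - t) * f a + t * f b = f a + t * (f b - f a) := by ring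
      rw [hg]; dsimp only; linarith [hcv, this.symm ▸ hcv]
    have hg0 : g 0 = f a := by simp [hg]
    rw [slope_def_field]
    rw [hg0]
    rw [div_le_iff₀ (by simpa using ht.1)]
    have : t - 0 = t := by ring
    rw [this]
    linarith
  have htend : Filter.Tendsto (slope g 0) (nhdsWithin 0 (Ioi 0)) (nhds (inner ℝ (f' a) v : ℝ)) := by
    exact (hasDerivAt_iff_tendsto_slope.mp hd).mono_left
      (nhdsWithin_mono 0 (fun z hz => Set.mem_compl_singleton_iff.mpr (ne_of_gt hz)))
  have hle : (inner ℝ (f' a) v : ℝ) ≤ f b - f a := by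
    refine le_of_tendsto htend ?_
    filter_upwards [Ioc_mem_nhdsGT_of_mem (Set.mem_Ico.mpr ⟨le_refl 0, zero_lt_one⟩)] with t ht
    exact hslope t ht
  linarith

lemma descent_lemma {H : Type*} [NormedAddCommGroup H]
    [InnerProductSpace ℝ H] [CompleteSpace H]
    (f : H → ℝ) (f' : H → H) (L : ℝ) (hL : 0 < L)
    (hgrad : ∀ x, HasGradientAt f (f' x) x)
    (hlip : ∀ x y, ‖f' x - f' y‖ ≤ L * ‖x - y‖) (a b : H) :
    f b ≤ f a + (inner ℝ (f' a) (b - a) : ℝ) + L / 2 * ‖b - a‖ ^ 2 := by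
  set v := b - a with hv
  set C : ℝ := inner ℝ (f' a) v with hC
  set φ : ℝ → ℝ := fun t => f (a + t • v) - t * C - L / 2 * ‖v‖ ^ 2 * t ^ 2 with hφ
  have hder : ∀ t : ℝ, HasDerivAt φ
      ((inner ℝ (f' (a + t • v)) v : ℝ) - C - L * ‖v‖ ^ 2 * t) t := by
    intro t
    have h1 := hasDerivAt_comp_line f f' hgrad a v t
    have h2 : HasDerivAt (fun s : ℝ => s * C) C t := by
      simpa using (hasDerivAt_id t).mul_const C
    have h3 : HasDerivAt (fun s : ℝ => L / 2 * ‖v‖ ^ 2 * s ^ 2) (L * ‖v‖ ^ 2 * t) t := by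
      have := (hasDerivAt_pow 2 t).const_mul (L / 2 * ‖v‖ ^ 2)
      refine this.congr_deriv ?_
      ring
    exact (h1.sub h2).sub h3
  have hnonpos : ∀ t ∈ Ioo (0:ℝ) 1,
      (inner ℝ (f' (a + t • v)) v : ℝ) - C - L * ‖v‖ ^ 2 * t ≤ 0 := by
    intro t ht
    have h1 : (inner ℝ (f' (a + t • v)) v : ℝ) - C = inner ℝ (f' (a + t • v) - f' a) v := by
      rw [hC, inner_sub_left]
    have h2 : (inner ℝ (f' (a + t • v) - f' a) v : ℝ) ≤ ‖f' (a + t • v) - f' a‖ * ‖v‖ :=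
      real_inner_le_norm _ _
    have h3 : ‖f' (a + t • v) - f' a‖ ≤ L * (t * ‖v‖) := by
      have := hlip (a + t • v) a
      have heq : a + t • v - a = t • v := by abel
      rw [heq] at this
      rwa [norm_smul, Real.norm_eq_abs, abs_of_pos ht.1] at this
    have h4 : ‖f' (a + t • v) - f' a‖ * ‖v‖ ≤ L * (t * ‖v‖) * ‖v‖ :=
      mul_le_mul_of_nonneg_right h3 (norm_nonneg v)
    have : L * (t * ‖v‖) * ‖v‖ = L * ‖v‖ ^ 2 * t := by ring
    rw [this] at h4
    rw [h1]
    linarith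
  have hanti : AntitoneOn φ (Icc 0 1) := by
    apply antitoneOn_of_deriv_nonpos (convex_Icc 0 1)
    · exact fun t _ => ((hder t).differentiableAt).continuousAt.continuousWithinAt
    · intro t ht
      rw [interior_Icc] at ht
      exact (hder t).differentiableAt.differentiableWithinAt
    · intro t ht
      rw [interior_Icc] at ht
      rw [(hder t).deriv]
      exact hnonpos t ht
  have h01 : φ 1 ≤ φ 0 := hanti (Set.mem_Icc.mpr ⟨le_refl 0, zero_le_one⟩)
    (Set.mem_Icc.mpr ⟨zero_le_one, le_refl 1⟩) zero_le_one
  have hφ0 : φ 0 = f a := by simp [hφ]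
  have hφ1 : φ 1 = f b - C - L / 2 * ‖v‖ ^ 2 := by
    have h1v : a + (1:ℝ) • v = b := by rw [hv]; module
    simp only [hφ, one_pow, one_mul, h1v]; ring
  rw [hφ0, hφ1] at h01
  linarith

theorem zero_gap_implies_equal_gradients {H : Type*} [NormedAddCommGroup H]
    [InnerProductSpace ℝ H] [CompleteSpace H]
    (f : H → ℝ) (f' : H → H) (L : ℝ) (hL : 0 < L)
    (hconv : ConvexOn ℝ Set.univ f)
    (hgrad : ∀ x, HasGradientAt f (f' x) x)
    (hlip : ∀ x y, ‖f' x - f' y‖ ≤ L * ‖x - y‖)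
    (x y : H)
    (hzero : (inner ℝ (f' y) (y - x) : ℝ) - (f y - f x) = 0) :
    f' y = f' x := by
  set G : H := f' x - f' y with hG
  set b : H := x - L⁻¹ • G with hb
  have hbx : b - x = -(L⁻¹ • G) := by rw [hb]; abel
  have h1 := descent_lemma f f' L hL hgrad hlip x b
  have h2 := convex_grad_lower f f' hconv hgrad y b
  -- f x = f y + ⟪f' y, x - y⟫
  have hfx : f x = f y + (inner ℝ (f' y) (x - y) : ℝ) := by
    have : (inner ℝ (f' y) (y - x) : ℝ) = -(inner ℝ (f' y) (x - y) : ℝ) := by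
      rw [← inner_neg_right]; congr 1; abel
    rw [this] at hzero
    linarith
  have hsplit : (inner ℝ (f' y) (b - y) : ℝ) =
      (inner ℝ (f' y) (x - y) : ℝ) + (inner ℝ (f' y) (b - x) : ℝ) := by
    rw [← inner_add_right]
    congr 1
    abel
  -- inner ℝ G (b - x) = -L⁻¹ * ‖G‖^2
  have hinnG : (inner ℝ G (b - x) : ℝ) = -(L⁻¹ * ‖G‖ ^ 2) := by
    rw [hbx, inner_neg_right, real_inner_smul_right, real_inner_self_eq_norm_sq]
  have hinn' : (inner ℝ (f' x) (b - x) : ℝ) - (inner ℝ (f' y) (b - x) : ℝ)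
      = (inner ℝ G (b - x) : ℝ) := by
    rw [hG, inner_sub_left]
  have hnorm : ‖b - x‖ ^ 2 = L⁻¹ ^ 2 * ‖G‖ ^ 2 := by
    rw [hbx, norm_neg, norm_smul, Real.norm_eq_abs, abs_of_pos (inv_pos.mpr hL), mul_pow]
  -- combine
  have hkey : (0:ℝ) ≤ -(L⁻¹ * ‖G‖ ^ 2) + L / 2 * (L⁻¹ ^ 2 * ‖G‖ ^ 2) := by
    have := h1
    rw [hnorm] at this
    nlinarith [h2, hfx, hsplit, hinnG, hinn', this]
  have hL' : L⁻¹ > 0 := inv_pos.mpr hL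
  have hsq : ‖G‖ ^ 2 ≤ 0 := by
    have hfact : -(L⁻¹ * ‖G‖ ^ 2) + L / 2 * (L⁻¹ ^ 2 * ‖G‖ ^ 2)
        = -(L⁻¹ / 2) * ‖G‖ ^ 2 := by
      field_simp
      ring
    rw [hfact] at hkey
    nlinarith
  have hG0 : G = 0 := by
    have : ‖G‖ = 0 := by nlinarith [norm_nonneg G, sq_nonneg ‖G‖]
    exact norm_eq_zero.mp this
  have : f' x = f' y := by
    have := sub_eq_zero.mp (hG ▸ hG0)
    exact this
  exact this.symm
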